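/- Let x = (Q,P) ∈ ℤ² be primitive (i.e. with coprime coordinates) with Q ≥ 1, such that neither x nor −x equals any of the points x_m = (Q_m, P_m) with −1 ≤ m < s or x_{m,t} = (Q_{m,t}, P_{m,t}) with 1 ≤ m < s and 0 < t < a_m. Let n with 1 ≤ n ≤ s be the integer such that Q_{n−1} ≤ Q < Q_n (with Q_s = ∞ when s < ∞). Then |Qξ − P| ≥ Δ_{n−2} and, for all q ≥ 0, L_x(q) ≥ max{ L_{x_{n−2}}(q), L_{x_{n−1}}(q) }. -/

import Mathlib

open Pointwise

/-- Distance from a real number to the nearest integer. -/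
noncomputable def nearestInt (ξ : ℝ) : ℝ := sInf (Set.range fun m : ℤ => |ξ - (m : ℝ)|)

/-- The convex body `C_ξ(e^q) = {(x,y) : |x| ≤ e^q, |xξ - y| ≤ e^{-q}}`. -/
def body (ξ q : ℝ) : Set (ℝ × ℝ) :=
  {p : ℝ × ℝ | |p.1| ≤ Real.exp q ∧ |p.1 * ξ - p.2| ≤ Real.exp (-q)}

/-- The `j`-th successive minimum of `C_ξ(e^q)` with respect to the lattice `ℤ²`:
the smallest `λ ≥ 0` such that `λ • C_ξ(e^q)` contains at least `j` linearly
independent points of `ℤ²`. -/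
noncomputable def lam (ξ q : ℝ) (j : ℕ) : ℝ :=
  sInf {l : ℝ | 0 ≤ l ∧ ∃ v : Fin j → ℤ × ℤ,
    LinearIndependent ℝ (fun i => ((((v i).1 : ℝ)), (((v i).2 : ℝ)))) ∧
    ∀ i, ((((v i).1 : ℝ)), (((v i).2 : ℝ))) ∈ l • body ξ q}

/-- `L_{ξ,j}(q) = log λ_j(C_ξ(e^q))`. -/
noncomputable def LL (ξ : ℝ) (j : ℕ) (q : ℝ) : ℝ := Real.log (lam ξ q j)

/-- `L_x(q)`: the logarithm of the smallest `λ ≥ 0` with `x ∈ λ • C_ξ(e^q)`, namely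
`log (max (|Q| e^{-q}) (|Qξ - P| e^q))`, which equals
`max (log |Q| - q) (log |Qξ - P| + q)` (the first term being omitted when `Q = 0`,
the second when `Qξ - P = 0`). -/
noncomputable def Lx (ξ : ℝ) (x : ℤ × ℤ) (q : ℝ) : ℝ :=
  Real.log (max (|(x.1 : ℝ)| * Real.exp (-q)) (|(x.1 : ℝ) * ξ - (x.2 : ℝ)| * Real.exp q))

/-- Data of a real number `ξ ∈ [0,1/2]` together with its simple continued fraction
expansion `ξ = [0; a 1, a 2, …]`, with partial quotients `a n ≥ 1` for `1 ≤ n < s`,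
where `s ∈ ℕ* ∪ {∞}` (encoded in `WithTop ℤ`), `a (s-1) ≥ 2` if `2 ≤ s < ∞`
(`s = 1` meaning `ξ = 0`), and with `Q`, `P` the denominators and numerators of its
convergents, given by the standard recurrences with initial values
`P (-1) = Q 0 = 1`, `P 0 = Q (-1) = 0`.  The fact that `[0; a 1, a 2, …]` is indeed
the continued fraction expansion of `ξ` is recorded through the value conditions
`hfin` (if `s < ∞` then `ξ = P (s-1) / Q (s-1)`) and `hinf` (if `s = ∞` then
`P n / Q n → ξ`), which, given the constraints on the `a n`, characterize it. -/
structure CFData where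
  ξ : ℝ
  s : WithTop ℤ
  a : ℤ → ℤ
  Q : ℤ → ℤ
  P : ℤ → ℤ
  hξ0 : 0 ≤ ξ
  hξhalf : ξ ≤ 1 / 2
  hs : 1 ≤ s
  ha : ∀ n : ℤ, 1 ≤ n → (n : WithTop ℤ) < s → 1 ≤ a n
  halast : ∀ n : ℤ, 2 ≤ n → (n : WithTop ℤ) = s → 2 ≤ a (n - 1)
  hQ0 : Q 0 = 1
  hQneg : Q (-1) = 0
  hP0 : P 0 = 0
  hPneg : P (-1) = 1
  hQrec : ∀ n : ℤ, 1 ≤ n → (n : WithTop ℤ) < s → Q n = Q (n - 2) + a n * Q (n - 1)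
  hPrec : ∀ n : ℤ, 1 ≤ n → (n : WithTop ℤ) < s → P n = P (n - 2) + a n * P (n - 1)
  hfin : ∀ k : ℤ, (k : WithTop ℤ) = s → ξ = (P (k - 1) : ℝ) / (Q (k - 1) : ℝ)
  hinf : s = ⊤ → Filter.Tendsto (fun n : ℕ => (P (n : ℤ) : ℝ) / (Q (n : ℤ) : ℝ))
      Filter.atTop (nhds ξ)

namespace CFData

/-- `Δ n = |Q n • ξ - P n|`. -/
noncomputable def Δ (c : CFData) (n : ℤ) : ℝ := |(c.Q n : ℝ) * c.ξ - (c.P n : ℝ)|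

/-- `Q (n,t) = Q (n-2) + t * Q (n-1)`. -/
def Qt (c : CFData) (n t : ℤ) : ℤ := c.Q (n - 2) + t * c.Q (n - 1)

/-- `P (n,t) = P (n-2) + t * P (n-1)`. -/
def Pt (c : CFData) (n t : ℤ) : ℤ := c.P (n - 2) + t * c.P (n - 1)

/-- `Δ (n,t) = |Q (n,t) • ξ - P (n,t)|`. -/
noncomputable def Δt (c : CFData) (n t : ℤ) : ℝ := |(c.Qt n t : ℝ) * c.ξ - (c.Pt n t : ℝ)|

/-- `q n = (log (Q n) - log (Δ (n-1))) / 2`; in particular `q 0 = 0`. -/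
noncomputable def qcrit (c : CFData) (n : ℤ) : ℝ :=
  (Real.log (c.Q n : ℝ) - Real.log (c.Δ (n - 1))) / 2

end CFData

lemma absEqSign (e : ℤ) (x : ℝ) (he : e = 1 ∨ e = -1) (h : 0 ≤ (e : ℝ) * x) :
    |x| = (e : ℝ) * x := by
  rcases he with rfl | rfl
  · push_cast at h ⊢; rw [one_mul] at h ⊢; exact abs_of_nonneg h
  · push_cast at h ⊢
    rw [neg_one_mul] at h ⊢
    rw [abs_of_nonpos (by linarith)]


def epsZ (m : ℤ) : ℤ := if Even m then 1 else -1

lemma epsZ_sq (m : ℤ) : epsZ m * epsZ m = 1 := by unfold epsZ; split <;> norm_num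

lemma epsZ_succ (m : ℤ) : epsZ (m + 1) = - epsZ m := by
  unfold epsZ
  by_cases h : Even m
  · simp [h, Int.even_add_one, h]
  · simp [h, Int.even_add_one]

lemma epsZ_zero : epsZ 0 = 1 := by norm_num [epsZ]

lemma epsZ_neg_one : epsZ (-1) = -1 := by norm_num [epsZ, Int.even_iff]

namespace CFData

variable (c : CFData)

lemma coe_lt_of_lt_le {m n : ℤ} (h : m < n) (hn : (n : WithTop ℤ) ≤ c.s) :
    (m : WithTop ℤ) < c.s :=
  lt_of_lt_of_le (WithTop.coe_lt_coe.mpr h) hn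

lemma Qfacts : ∀ m : ℤ, 0 ≤ m → (m : WithTop ℤ) < c.s → 0 ≤ c.Q (m - 1) ∧ 1 ≤ c.Q m := by
  refine Int.le_induction ?_ ?_
  · intro _
    rw [show (0:ℤ) - 1 = -1 by ring, c.hQ0, c.hQneg]
    norm_num
  · intro k hk ih hk1
    have hks : (k : WithTop ℤ) < c.s := c.coe_lt_of_lt_le (by omega) hk1.le
    obtain ⟨h0, h1⟩ := ih hks
    have ha1 := c.ha (k + 1) (by omega) hk1
    have hrec := c.hQrec (k + 1) (by omega) hk1
    rw [show k + 1 - 2 = k - 1 by ring, show k + 1 - 1 = k by ring] at hrec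
    constructor
    · simpa using (by omega : (0:ℤ) ≤ c.Q k)
    · nlinarith

lemma Qmono : ∀ m : ℤ, 0 ≤ m → (m : WithTop ℤ) < c.s → c.Q (m - 1) ≤ c.Q m := by
  intro m hm hms
  rcases eq_or_lt_of_le hm with h | h
  · rw [← h]; rw [c.hQ0]; norm_num [c.hQneg]
  · have hrec := c.hQrec m (by omega) hms
    have h1 := c.Qfacts m hm hms
    have h2 := c.Qfacts (m-1) (by omega) (c.coe_lt_of_lt_le (by omega) hms.le)
    have ha1 := c.ha m (by omega) hms
    rw [show m - 1 - 1 = m - 2 by ring] at h2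
    nlinarith [h1.1, h2.1, h2.2]

lemma det : ∀ m : ℤ, 0 ≤ m → (m : WithTop ℤ) < c.s →
    c.Q m * c.P (m - 1) - c.P m * c.Q (m - 1) = epsZ m := by
  refine Int.le_induction ?_ ?_
  · intro _
    rw [show (0:ℤ) - 1 = -1 by ring, c.hQ0, c.hP0, c.hQneg, c.hPneg, epsZ_zero]
    ring
  · intro k hk ih hk1
    have hks : (k : WithTop ℤ) < c.s := c.coe_lt_of_lt_le (by omega) hk1.le
    have hD := ih hks
    have hQr := c.hQrec (k + 1) (by omega) hk1
    have hPr := c.hPrec (k + 1) (by omega) hk1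
    rw [show k + 1 - 2 = k - 1 by ring] at hQr hPr
    rw [show k + 1 - 1 = k by ring] at hQr hPr ⊢
    rw [hQr, hPr, epsZ_succ]
    linear_combination (-1 : ℤ) * hD

/-- nonnegativity of `epsZ m * (Q m * P k - P m * Q k)` for `k ≥ m`. -/
lemma g_nonneg (m : ℤ) (hm : -1 ≤ m) :
    ∀ k : ℤ, m ≤ k → (k : WithTop ℤ) < c.s →
      0 ≤ epsZ m * (c.Q m * c.P k - c.P m * c.Q k) := by
  have aux : ∀ k : ℤ, m + 1 ≤ k → (k : WithTop ℤ) < c.s →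
      0 ≤ epsZ m * (c.Q m * c.P (k - 1) - c.P m * c.Q (k - 1)) ∧
      1 ≤ epsZ m * (c.Q m * c.P k - c.P m * c.Q k) := by
    refine Int.le_induction ?_ ?_
    · intro hks
      constructor
      · rw [show m + 1 - 1 = m by ring]
        have : c.Q m * c.P m - c.P m * c.Q m = 0 := by ring
        rw [this, mul_zero]
      · rcases (by omega : m = -1 ∨ 0 ≤ m) with rfl | hm0
        · rw [c.hQneg, c.hPneg, epsZ_neg_one]
          rw [show (-1 : ℤ) + 1 = 0 by ring, c.hQ0, c.hP0]
          norm_num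
        · have hD := c.det (m + 1) (by omega) hks
          rw [show m + 1 - 1 = m by ring, epsZ_succ] at hD
          have he2 := epsZ_sq m
          have : epsZ m * (c.Q m * c.P (m + 1) - c.P m * c.Q (m + 1)) = 1 := by
            linear_combination (-(epsZ m)) * hD + he2
          omega
    · intro k hk ih hk1
      have hks : (k : WithTop ℤ) < c.s := c.coe_lt_of_lt_le (by omega) hk1.le
      obtain ⟨h0, h1⟩ := ih hks
      have ha1 := c.ha (k + 1) (by omega) hk1
      have hQr := c.hQrec (k + 1) (by omega) hk1
      have hPr := c.hPrec (k + 1) (by omega) hk1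
      rw [show k + 1 - 2 = k - 1 by ring, show k + 1 - 1 = k by ring] at hQr hPr
      have key : epsZ m * (c.Q m * c.P (k + 1) - c.P m * c.Q (k + 1)) =
          epsZ m * (c.Q m * c.P (k - 1) - c.P m * c.Q (k - 1)) +
          c.a (k + 1) * (epsZ m * (c.Q m * c.P k - c.P m * c.Q k)) := by
        rw [hQr, hPr]; ring
      constructor
      · rw [show k + 1 - 1 = k by ring]; omega
      · nlinarith
  intro k hk hks
  rcases eq_or_lt_of_le hk with h | h
  · rw [← h]
    have : c.Q m * c.P m - c.P m * c.Q m = 0 := by ring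
    rw [this, mul_zero]
  · have h := (aux k (by omega) hks).2
    linarith

/-- The sign of `Q m * ξ - P m` is `(-1)^m`. -/
lemma sign (m : ℤ) (hm : -1 ≤ m) (hms : (m : WithTop ℤ) < c.s) :
    0 ≤ (epsZ m : ℝ) * ((c.Q m : ℝ) * c.ξ - (c.P m : ℝ)) := by
  rcases eq_or_ne c.s ⊤ with htop | hfin
  · -- infinite case
    have hlim := c.hinf htop
    have hTend : Filter.Tendsto
        (fun k : ℕ => (epsZ m : ℝ) * ((c.Q m : ℝ) * ((c.P (k : ℤ) : ℝ) / (c.Q (k : ℤ) : ℝ)) - (c.P m : ℝ)))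
        Filter.atTop (nhds ((epsZ m : ℝ) * ((c.Q m : ℝ) * c.ξ - (c.P m : ℝ)))) := by
      exact (((hlim.const_mul ((c.Q m : ℝ))).sub tendsto_const_nhds).const_mul _)
    refine ge_of_tendsto hTend ?_
    rw [Filter.eventually_atTop]
    refine ⟨m.toNat + 1, fun k hk => ?_⟩
    have hk' : m ≤ (k : ℤ) := by omega
    have hks : ((k : ℤ) : WithTop ℤ) < c.s := htop ▸ WithTop.coe_lt_top _
    have hQk : 1 ≤ c.Q (k : ℤ) := (c.Qfacts (k : ℤ) (by positivity) hks).2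
    have hg := c.g_nonneg m hm (k : ℤ) hk' hks
    have hQk' : (0 : ℝ) < (c.Q (k : ℤ) : ℝ) := by exact_mod_cast hQk
    rw [show (epsZ m : ℝ) * ((c.Q m : ℝ) * ((c.P (k : ℤ) : ℝ) / (c.Q (k : ℤ) : ℝ)) - (c.P m : ℝ)) =
        ((epsZ m * (c.Q m * c.P (k : ℤ) - c.P m * c.Q (k : ℤ)) : ℤ) : ℝ) / (c.Q (k : ℤ) : ℝ) by
      rw [eq_div_iff (ne_of_gt hQk')]; push_cast; field_simp]
    positivity
  · -- finite case
    obtain ⟨σ, hσ⟩ := WithTop.ne_top_iff_exists.mp hfin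
    have hσ1 : 1 ≤ σ := by
      have := c.hs; rw [← hσ] at this
      exact_mod_cast (by exact_mod_cast this : ((1:ℤ) : WithTop ℤ) ≤ (σ : WithTop ℤ))
    have hmσ : m < σ := by rw [← hσ] at hms; exact_mod_cast hms
    have hσs : ((σ - 1 : ℤ) : WithTop ℤ) < c.s := c.coe_lt_of_lt_le (by omega) hσ.le
    have hξ := c.hfin σ hσ
    have hQσ : 1 ≤ c.Q (σ - 1) := (c.Qfacts (σ - 1) (by omega) hσs).2
    have hQσ' : (0 : ℝ) < (c.Q (σ - 1) : ℝ) := by exact_mod_cast hQσ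
    have hg := c.g_nonneg m hm (σ - 1) (by omega) hσs
    rw [hξ]
    rw [show (epsZ m : ℝ) * ((c.Q m : ℝ) * ((c.P (σ - 1) : ℝ) / (c.Q (σ - 1) : ℝ)) - (c.P m : ℝ)) =
        ((epsZ m * (c.Q m * c.P (σ - 1) - c.P m * c.Q (σ - 1)) : ℤ) : ℝ) / (c.Q (σ - 1) : ℝ) by
      rw [eq_div_iff (ne_of_gt hQσ')]; push_cast; field_simp]
    positivity

lemma delta_last (σ : ℤ) (hσ : (σ : WithTop ℤ) = c.s) :
    (c.Q (σ - 1) : ℝ) * c.ξ - (c.P (σ - 1) : ℝ) = 0 := by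
  have hσ1 : 1 ≤ σ := by
    have := c.hs; rw [← hσ] at this
    exact_mod_cast (by exact_mod_cast this : ((1:ℤ) : WithTop ℤ) ≤ (σ : WithTop ℤ))
  have hσs : ((σ - 1 : ℤ) : WithTop ℤ) < c.s := c.coe_lt_of_lt_le (by omega) hσ.le
  have hQσ : 1 ≤ c.Q (σ - 1) := (c.Qfacts (σ - 1) (by omega) hσs).2
  have hQσ' : (0 : ℝ) < (c.Q (σ - 1) : ℝ) := by exact_mod_cast hQσ
  rw [c.hfin σ hσ]
  field_simp; ring

end CFData

theorem stmt10 (c : CFData) (Qx Px : ℤ) (hcop : IsCoprime Qx Px) (hQ1 : 1 ≤ Qx)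
    (hnot : ∀ e : ℤ, e = 1 ∨ e = -1 →
      (∀ m : ℤ, -1 ≤ m → (m : WithTop ℤ) < c.s → (e * Qx, e * Px) ≠ (c.Q m, c.P m)) ∧
      (∀ m t : ℤ, 1 ≤ m → (m : WithTop ℤ) < c.s → 0 < t → t < c.a m →
        (e * Qx, e * Px) ≠ (c.Qt m t, c.Pt m t)))
    (n : ℤ) (hn1 : 1 ≤ n) (hns : (n : WithTop ℤ) ≤ c.s)
    (hlow : c.Q (n - 1) ≤ Qx) (hhigh : (n : WithTop ℤ) < c.s → Qx < c.Q n) :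
    c.Δ (n - 2) ≤ |(Qx : ℝ) * c.ξ - (Px : ℝ)| ∧
    ∀ q : ℝ, 0 ≤ q →
      max (Lx c.ξ (c.Q (n - 2), c.P (n - 2)) q) (Lx c.ξ (c.Q (n - 1), c.P (n - 1)) q) ≤
        Lx c.ξ (Qx, Px) q := by
  have hnm1s : ((n - 1 : ℤ) : WithTop ℤ) < c.s := c.coe_lt_of_lt_le (by omega) hns
  have hnm2s : ((n - 2 : ℤ) : WithTop ℤ) < c.s := c.coe_lt_of_lt_le (by omega) hns
  have hQf1 := c.Qfacts (n - 1) (by omega) hnm1s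
  rw [show n - 1 - 1 = n - 2 by ring] at hQf1
  obtain ⟨hQ2nn, hQ1pos⟩ := hQf1
  have hQle : c.Q (n - 2) ≤ c.Q (n - 1) := by
    have h := c.Qmono (n - 1) (by omega) hnm1s
    rwa [show n - 1 - 1 = n - 2 by ring] at h
  have hD := c.det (n - 1) (by omega) hnm1s
  rw [show n - 1 - 1 = n - 2 by ring] at hD
  set e : ℤ := epsZ (n - 1) with he
  have he2 : e * e = 1 := epsZ_sq _
  have he1 : e = 1 ∨ e = -1 := Int.isUnit_iff.mp (IsUnit.of_mul_eq_one _ he2)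
  -- coordinates in the basis
  set u : ℤ := e * (Qx * c.P (n - 2) - Px * c.Q (n - 2)) with hu_def
  set v : ℤ := e * (Px * c.Q (n - 1) - Qx * c.P (n - 1)) with hv_def
  have hu : u * c.Q (n - 1) + v * c.Q (n - 2) = Qx := by
    rw [hu_def, hv_def]; linear_combination (e * Qx) * hD + Qx * he2
  have hp : u * c.P (n - 1) + v * c.P (n - 2) = Px := by
    rw [hu_def, hv_def]; linear_combination (e * Px) * hD + Px * he2
  -- real deltas
  set δ1 : ℝ := (c.Q (n - 1) : ℝ) * c.ξ - (c.P (n - 1) : ℝ) with hδ1d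
  set δ2 : ℝ := (c.Q (n - 2) : ℝ) * c.ξ - (c.P (n - 2) : ℝ) with hδ2d
  have hδx : (Qx : ℝ) * c.ξ - (Px : ℝ) = (u : ℝ) * δ1 + (v : ℝ) * δ2 := by
    rw [hδ1d, hδ2d, ← hu, ← hp]; push_cast; ring
  have hs1 : 0 ≤ (e : ℝ) * δ1 := by
    have h := c.sign (n - 1) (by omega) hnm1s
    rw [← he, ← hδ1d] at h; exact h
  have heps2 : epsZ (n - 2) = -e := by
    have h := epsZ_succ (n - 2)
    rw [show n - 2 + 1 = n - 1 by ring, ← he] at h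
    linarith
  have hs2 : 0 ≤ (-e : ℝ) * δ2 := by
    have h := c.sign (n - 2) (by omega) hnm2s
    rw [heps2, ← hδ2d] at h; push_cast at h ⊢; linarith
  have habs1 : |δ1| = (e : ℝ) * δ1 := absEqSign e δ1 he1 hs1
  have habs2 : |δ2| = (-e : ℝ) * δ2 := by
    have h := absEqSign (-e) δ2 (by omega) (by push_cast at hs2 ⊢; linarith)
    push_cast at h ⊢; linarith
  -- nonvanishing of u and v
  have hv_ne : v ≠ 0 := by
    intro hv0
    rw [hv0] at hu hp
    have hu' : u * c.Q (n - 1) = Qx := by linarith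
    have hp' : u * c.P (n - 1) = Px := by linarith
    have hun : IsUnit u := hcop.isUnit_of_dvd' ⟨c.Q (n - 1), hu'.symm⟩ ⟨c.P (n - 1), hp'.symm⟩
    have heu := Int.isUnit_iff.mp hun
    have huu : u * u = 1 := by rcases heu with h | h <;> rw [h] <;> norm_num
    refine (hnot u heu).1 (n - 1) (by omega) hnm1s ?_
    simp only [Prod.mk.injEq]
    constructor
    · linear_combination (-u) * hu' + c.Q (n - 1) * huu
    · linear_combination (-u) * hp' + c.P (n - 1) * huu
  have hu_ne : u ≠ 0 := by
    intro hu0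
    rw [hu0] at hu hp
    have hu' : v * c.Q (n - 2) = Qx := by linarith
    have hp' : v * c.P (n - 2) = Px := by linarith
    have hun : IsUnit v := hcop.isUnit_of_dvd' ⟨c.Q (n - 2), hu'.symm⟩ ⟨c.P (n - 2), hp'.symm⟩
    have heu := Int.isUnit_iff.mp hun
    have huu : v * v = 1 := by rcases heu with h | h <;> rw [h] <;> norm_num
    refine (hnot v heu).1 (n - 2) (by omega) hnm2s ?_
    simp only [Prod.mk.injEq]
    constructor
    · linear_combination (-v) * hu' + c.Q (n - 2) * huu
    · linear_combination (-v) * hp' + c.P (n - 2) * huu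
  -- the two key estimates
  have hmain : |δ2| ≤ |(Qx : ℝ) * c.ξ - (Px : ℝ)| ∧ |δ1| ≤ |δ2| := by
    rcases eq_or_lt_of_le hns with hEq | hLt
    · -- n = s : last convergent, δ1 = 0
      have hδ10 : δ1 = 0 := by rw [hδ1d]; exact c.delta_last n hEq
      have hvabs : (1 : ℝ) ≤ |(v : ℝ)| := by
        rw [← Int.cast_abs]
        have h1 : (1 : ℤ) ≤ |v| := by
          rcases hv_ne.lt_or_gt with h | h
          · rw [abs_of_neg h]; omega
          · rw [abs_of_pos h]; omega
        exact_mod_cast h1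
      constructor
      · rw [hδx, hδ10, mul_zero, zero_add, abs_mul]
        have h2 := mul_le_mul_of_nonneg_right hvabs (abs_nonneg δ2)
        linarith
      · rw [hδ10]; simp [abs_nonneg]
    · -- n < s
      have hQn := c.hQrec n hn1 hLt
      have hPn := c.hPrec n hn1 hLt
      have han := c.ha n hn1 hLt
      have hen : epsZ n = -e := by
        have h := epsZ_succ (n - 1)
        rw [show n - 1 + 1 = n by ring, ← he] at h
        linarith
      have hBA : (c.a n : ℝ) * ((e : ℝ) * δ1) ≤ (-e : ℝ) * δ2 := by
        have hsn := c.sign n (by omega) hLt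
        rw [hen] at hsn
        have hrw : ((-e : ℤ) : ℝ) * ((c.Q n : ℝ) * c.ξ - (c.P n : ℝ)) =
            (-e : ℝ) * δ2 - (c.a n : ℝ) * ((e : ℝ) * δ1) := by
          rw [hδ1d, hδ2d, hQn, hPn]; push_cast; ring
        rw [hrw] at hsn; linarith
      have hA0 : 0 ≤ (e : ℝ) * δ1 := hs1
      have hB0 : 0 ≤ (-e : ℝ) * δ2 := hs2
      have hanR : (1 : ℝ) ≤ (c.a n : ℝ) := by exact_mod_cast han
      have hAB : |δ1| ≤ |δ2| := by
        rw [habs1, habs2]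
        have h1 := mul_le_mul_of_nonneg_right hanR hA0
        push_cast at h1 ⊢
        linarith
      refine ⟨?_, hAB⟩
      have habsx : |(Qx : ℝ) * c.ξ - (Px : ℝ)| =
          |(u : ℝ) * ((e : ℝ) * δ1) - (v : ℝ) * ((-e : ℝ) * δ2)| := by
        rw [hδx, show (u : ℝ) * ((e : ℝ) * δ1) - (v : ℝ) * ((-e : ℝ) * δ2) =
          (e : ℝ) * ((u : ℝ) * δ1 + (v : ℝ) * δ2) by ring, abs_mul]
        rcases he1 with h | h <;> rw [h] <;> norm_num
      rw [habsx, habs2]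
      set A : ℝ := (e : ℝ) * δ1
      set B : ℝ := (-e : ℝ) * δ2
      rcases lt_trichotomy u 0 with hult | hu0 | hugt
      · rcases lt_trichotomy v 0 with hvlt | hv0 | hvgt
        · -- u < 0, v < 0 : impossible
          exfalso
          have h1 : u * c.Q (n - 1) ≤ (-1) * c.Q (n - 1) :=
            mul_le_mul_of_nonneg_right (by omega) (by omega)
          have h2 : v * c.Q (n - 2) ≤ 0 :=
            mul_nonpos_of_nonpos_of_nonneg (by omega) (by omega)
          linarith [hu]
        · exact absurd hv0 hv_ne
        · -- u < 0, v > 0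
          have huR : (u : ℝ) ≤ -1 := by exact_mod_cast (by omega : u ≤ -1)
          have hvR : (1 : ℝ) ≤ (v : ℝ) := by exact_mod_cast (by omega : 1 ≤ v)
          have m1 : (u : ℝ) * A ≤ (-1 : ℝ) * A := mul_le_mul_of_nonneg_right huR hA0
          have m2 : (1 : ℝ) * B ≤ (v : ℝ) * B := mul_le_mul_of_nonneg_right hvR hB0
          have : B ≤ -((u : ℝ) * A - (v : ℝ) * B) := by linarith
          exact le_trans this (neg_le_abs _)
      · exact absurd hu0 hu_ne
      · rcases lt_trichotomy v 0 with hvlt | hv0 | hvgt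
        · -- u > 0, v < 0
          have huR : (1 : ℝ) ≤ (u : ℝ) := by exact_mod_cast (by omega : 1 ≤ u)
          have hvR : (v : ℝ) ≤ -1 := by exact_mod_cast (by omega : v ≤ -1)
          have m1 : (0 : ℝ) ≤ (u : ℝ) * A := mul_nonneg (by linarith) hA0
          have m2 : (v : ℝ) * B ≤ (-1 : ℝ) * B := mul_le_mul_of_nonneg_right hvR hB0
          have : B ≤ (u : ℝ) * A - (v : ℝ) * B := by linarith
          exact le_trans this (le_abs_self _)
        · exact absurd hv0 hv_ne
        · -- u > 0, v > 0
          have hQxlt := hhigh hLt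
          have hua : u ≤ c.a n - 1 := by
            by_contra hcon
            push_neg at hcon
            have h1 : c.a n * c.Q (n - 1) ≤ u * c.Q (n - 1) :=
              mul_le_mul_of_nonneg_right (by omega) (by omega)
            have h2 : c.Q (n - 2) ≤ v * c.Q (n - 2) :=
              le_mul_of_one_le_left (by omega) (by omega)
            linarith [hu, hQn, hQxlt, h1, h2]
          rcases (by omega : v = 1 ∨ 2 ≤ v) with hv1 | hv2
          · exfalso
            refine (hnot 1 (Or.inl rfl)).2 n u hn1 hLt hugt (by omega) ?_
            simp only [Prod.mk.injEq, one_mul, CFData.Qt, CFData.Pt]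
            rw [hv1] at hu hp
            constructor
            · linear_combination -hu
            · linear_combination -hp
          · have huR : (u : ℝ) ≤ (c.a n : ℝ) - 1 := by exact_mod_cast (by omega : u ≤ c.a n - 1)
            have huR0 : (1 : ℝ) ≤ (u : ℝ) := by exact_mod_cast (by omega : 1 ≤ u)
            have hvR : (2 : ℝ) ≤ (v : ℝ) := by exact_mod_cast hv2
            have m1 : (u : ℝ) * A ≤ ((c.a n : ℝ) - 1) * A := mul_le_mul_of_nonneg_right huR hA0
            have m2 : (2 : ℝ) * B ≤ (v : ℝ) * B := mul_le_mul_of_nonneg_right hvR hB0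
            have : B ≤ -((u : ℝ) * A - (v : ℝ) * B) := by nlinarith [hBA, hA0, hB0, m1, m2]
            exact le_trans this (neg_le_abs _)
  obtain ⟨hkey, hAB⟩ := hmain
  constructor
  · simp only [CFData.Δ]
    rw [show n - 2 = n - 2 by ring, ← hδ2d]
    exact hkey
  · intro q hq
    have hexp1 : (0 : ℝ) < Real.exp (-q) := Real.exp_pos _
    have hexp2 : (0 : ℝ) < Real.exp q := Real.exp_pos _
    have hQxR : |(Qx : ℝ)| = (Qx : ℝ) := abs_of_pos (by exact_mod_cast hQ1)
    have hQ1R : |(c.Q (n - 1) : ℝ)| = (c.Q (n - 1) : ℝ) :=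
      abs_of_nonneg (by exact_mod_cast (by omega : (0:ℤ) ≤ c.Q (n - 1)))
    have hQ2R : |(c.Q (n - 2) : ℝ)| = (c.Q (n - 2) : ℝ) := abs_of_nonneg (by exact_mod_cast hQ2nn)
    have hlowR : (c.Q (n - 1) : ℝ) ≤ (Qx : ℝ) := by exact_mod_cast hlow
    have hQleR : (c.Q (n - 2) : ℝ) ≤ (c.Q (n - 1) : ℝ) := by exact_mod_cast hQle
    simp only [Lx, ← hδ1d, ← hδ2d]
    apply max_le
    · -- the (n-2) term
      apply Real.log_le_log
      · -- positivity
        rcases (by omega : n = 1 ∨ 2 ≤ n) with h1 | h2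
        · have : δ2 = -1 := by
            rw [hδ2d, h1, show (1 : ℤ) - 2 = -1 by norm_num, c.hQneg, c.hPneg]
            push_cast; ring
          apply lt_max_of_lt_right
          rw [this, abs_neg, abs_one, one_mul]
          exact hexp2
        · have : (1 : ℤ) ≤ c.Q (n - 2) := (c.Qfacts (n - 2) (by omega) hnm2s).2
          apply lt_max_of_lt_left
          rw [hQ2R]
          have h3 : (1 : ℝ) ≤ (c.Q (n - 2) : ℝ) := by exact_mod_cast this
          exact mul_pos (by linarith) hexp1
      · apply max_le
        · refine le_max_of_le_left ?_
          rw [hQxR, hQ2R]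
          exact mul_le_mul_of_nonneg_right (by linarith) hexp1.le
        · refine le_max_of_le_right ?_
          exact mul_le_mul_of_nonneg_right hkey hexp2.le
    · -- the (n-1) term
      apply Real.log_le_log
      · apply lt_max_of_lt_left
        rw [hQ1R]
        have h3 : (1 : ℝ) ≤ (c.Q (n - 1) : ℝ) := by exact_mod_cast hQ1pos
        exact mul_pos (by linarith) hexp1
      · apply max_le
        · refine le_max_of_le_left ?_
          rw [hQxR, hQ1R]
          exact mul_le_mul_of_nonneg_right hlowR hexp1.le
        · refine le_max_of_le_right ?_
          exact mul_le_mul_of_nonneg_right (le_trans hAB hkey) hexp2.le
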